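/- Let 𝒳 be a d-dimensional trajectory set, (X,j) a node, f : 𝒳 → [−∞,∞], and suppose there exist V ∈ ℝ, n ≥ j, a non-anticipative family (H_i)_{j≤i≤n−1} on 𝒳_{(X,j)}, and a set E ⊆ 𝒳 that is conditionally null at (X,j), such that f(X̂) ≤ V + Σ_{i=j}^{n−1} H_i(X̂)·Δ_i X̂ for all X̂ ∈ 𝒳_{(X,j)} \ E. Then σ̄_j f(X) ≤ V. -/

import Mathlib

open scoped InnerProductSpace ENNReal
open Finset

namespace Traj

variable {E : Type*} [NormedAddCommGroup E] [InnerProductSpace ℝ E]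

/-- A trajectory set: a nonempty set of sequences sharing a common initial value. -/
def IsTrajectorySet (T : Set (ℕ → E)) (x0 : E) : Prop :=
  T.Nonempty ∧ ∀ X ∈ T, X 0 = x0

/-- The conditional trajectory set at the node `(X, k)`. -/
def condSet (T : Set (ℕ → E)) (X : ℕ → E) (k : ℕ) : Set (ℕ → E) :=
  {Y | Y ∈ T ∧ ∀ i ≤ k, Y i = X i}

/-- Non-anticipativity of a family `(G i)_{i ≥ j}` of functions on the conditional set. -/
def NonAnticipative (T : Set (ℕ → E)) (X : ℕ → E) (j : ℕ)
    {F : Type*} (G : ℕ → (ℕ → E) → F) : Prop :=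
  ∀ i, j ≤ i → ∀ Y ∈ condSet T X j, ∀ Z ∈ condSet T X j,
    (∀ k, j ≤ k → k ≤ i → Y k = Z k) → G i Y = G i Z

/-- The simple portfolio payoff `Π^{V,H}_{j,n}`. -/
noncomputable def piPort (H : ℕ → (ℕ → E) → E) (j n : ℕ) (V : ℝ) (Y : ℕ → E) : ℝ :=
  V + ∑ i ∈ Finset.Ico j n, ⟪H i Y, Y (i + 1) - Y i⟫_ℝ

/-- The total initial cost `Σ_{m ≥ 0} V^m` of a generalized portfolio (`V^m ≥ 0` for `m ≥ 1`). -/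
noncomputable def SuperhedgeCost (V : ℕ → ℝ) : EReal :=
  (V 0 : EReal) + ((∑' m : ℕ, ENNReal.ofReal (V (m + 1)) : ℝ≥0∞) : EReal)

/-- `(V, H, n)` is a generalized superhedge of `f` at node `(X, j)`: `f_0 = Π^{V⁰,H⁰}_{j,n₀}`
and, for `m ≥ 1`, `f_m = Π^{Vᵐ,Hᵐ}_{j,n_m}` with `Π^{Vᵐ,Hᵐ}_{j,n} ≥ 0` for all `n ≥ j`,
and `f ≤ Σ_{m ≥ 0} f_m` on the conditional set. -/
def IsSuperhedge (T : Set (ℕ → E)) (X : ℕ → E) (j : ℕ) (f : (ℕ → E) → EReal)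
    (V : ℕ → ℝ) (H : ℕ → ℕ → (ℕ → E) → E) (n : ℕ → ℕ) : Prop :=
  (∀ m, NonAnticipative T X j (H m)) ∧ (∀ m, j ≤ n m) ∧
  (∀ m, 1 ≤ m → ∀ k, j ≤ k → ∀ Y ∈ condSet T X j, 0 ≤ piPort (H m) j k (V m) Y) ∧
  (∀ Y ∈ condSet T X j,
    f Y ≤ (piPort (H 0) j (n 0) (V 0) Y : EReal)
      + ((∑' m : ℕ, ENNReal.ofReal (piPort (H (m + 1)) j (n (m + 1)) (V (m + 1)) Y) :
          ℝ≥0∞) : EReal))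

/-- The conditional superhedging operator `σ̄_j f (X)`. -/
noncomputable def sigmaUp (T : Set (ℕ → E)) (X : ℕ → E) (j : ℕ)
    (f : (ℕ → E) → EReal) : EReal :=
  sInf {c : EReal | ∃ V H n, IsSuperhedge T X j f V H n ∧ c = SuperhedgeCost V}

/-- The conditional underhedging operator `σ̲_j f = -σ̄_j (-f)`. -/
noncomputable def sigmaDown (T : Set (ℕ → E)) (X : ℕ → E) (j : ℕ)
    (f : (ℕ → E) → EReal) : EReal :=
  - sigmaUp T X j (fun Y => - f Y)

/-- Hedge data for the conditional norm operator: all portfolios are nonnegative. -/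
def IsNormHedge (T : Set (ℕ → E)) (X : ℕ → E) (j : ℕ) (f : (ℕ → E) → ℝ≥0∞)
    (V : ℕ → ℝ) (H : ℕ → ℕ → (ℕ → E) → E) (n : ℕ → ℕ) : Prop :=
  (∀ m, NonAnticipative T X j (H m)) ∧ (∀ m, j ≤ n m) ∧
  (∀ m, ∀ k, j ≤ k → ∀ Y ∈ condSet T X j, 0 ≤ piPort (H m) j k (V m) Y) ∧
  (∀ Y ∈ condSet T X j,
    f Y ≤ ∑' m : ℕ, ENNReal.ofReal (piPort (H m) j (n m) (V m) Y))

/-- The conditional norm operator `Ī_j f (X)` (for nonnegative extended-real `f`). -/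
noncomputable def Ibar (T : Set (ℕ → E)) (X : ℕ → E) (j : ℕ)
    (f : (ℕ → E) → ℝ≥0∞) : ℝ≥0∞ :=
  sInf {c : ℝ≥0∞ | ∃ V H n, IsNormHedge T X j f V H n ∧
    c = ∑' m : ℕ, ENNReal.ofReal (V m)}

/-- `A` is conditionally null at the node `(X, j)`. -/
def NullAt (T : Set (ℕ → E)) (X : ℕ → E) (j : ℕ) (A : Set (ℕ → E)) : Prop :=
  Ibar T X j (A.indicator fun _ => (1 : ℝ≥0∞)) = 0

/-- `A` is a (global) null set. -/
def IsNull (T : Set (ℕ → E)) (A : Set (ℕ → E)) : Prop :=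
  ∀ X ∈ T, NullAt T X 0 A

/-- Property `(L_{(X,j)})`. -/
def PropertyL (T : Set (ℕ → E)) (X : ℕ → E) (j : ℕ) : Prop :=
  ∀ V H n, IsSuperhedge T X j (fun _ => (0 : EReal)) V H n →
    (0 : EReal) ≤ SuperhedgeCost V

/-- `(X, k)` is an arbitrage-free node. -/
def ArbitrageFreeNode (T : Set (ℕ → E)) (X : ℕ → E) (k : ℕ) : Prop :=
  ∀ h : E, (∀ Y ∈ condSet T X k, ⟪h, Y (k + 1) - Y k⟫_ℝ = 0) ∨
    (⨅ Y ∈ condSet T X k, ((⟪h, Y (k + 1) - Y k⟫_ℝ : ℝ) : EReal)) < 0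

/-- The set `𝒩` of trajectories passing (non-constantly) through an arbitrage node. -/
def arbNull (T : Set (ℕ → E)) : Set (ℕ → E) :=
  {X | X ∈ T ∧ ∃ j : ℕ, ¬ ArbitrageFreeNode T X j ∧ X (j + 1) ≠ X j}

/-- Property `(L)`-a.e. -/
def LaeHolds (T : Set (ℕ → E)) : Prop :=
  (∀ X ∈ T \ arbNull T, ∀ k, 1 ≤ k → PropertyL T X k) ∧
  (∀ X ∈ T, PropertyL T X 0)

/-- A bounded non-anticipative stopping rule. -/
def BoundedStoppingRule (T : Set (ℕ → E)) (N : (ℕ → E) → ℕ) : Prop :=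
  (∃ nstar, ∀ X ∈ T, N X ≤ nstar) ∧
  (∀ k : ℕ, ∀ X ∈ T, ∀ Y ∈ T, (∀ i ≤ k, X i = Y i) → (N X ≤ k ↔ N Y ≤ k))

end Traj

namespace Traj

/-- if a single simple portfolio with initial value `V` superhedges `f` on the
conditional set off a conditionally null set, then `σ̄_j f(X) ≤ V`. -/
theorem sigmaUp_le_of_ae_superhedge
    (d : ℕ) (T : Set (ℕ → EuclideanSpace ℝ (Fin d))) (x0 : EuclideanSpace ℝ (Fin d))
    (hT : IsTrajectorySet T x0)
    (X : ℕ → EuclideanSpace ℝ (Fin d)) (hX : X ∈ T) (j : ℕ)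
    (f : (ℕ → EuclideanSpace ℝ (Fin d)) → EReal)
    (V : ℝ) (n : ℕ) (hn : j ≤ n)
    (H : ℕ → (ℕ → EuclideanSpace ℝ (Fin d)) → EuclideanSpace ℝ (Fin d))
    (hHna : ∀ i, j ≤ i → i < n → ∀ Y ∈ condSet T X j, ∀ Z ∈ condSet T X j,
      (∀ k, j ≤ k → k ≤ i → Y k = Z k) → H i Y = H i Z)
    (A : Set (ℕ → EuclideanSpace ℝ (Fin d))) (hA : NullAt T X j A)
    (hhedge : ∀ Y ∈ condSet T X j \ A,
      f Y ≤ ((V + ∑ i ∈ Finset.Ico j n, ⟪H i Y, Y (i + 1) - Y i⟫_ℝ : ℝ) : EReal)) :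
    sigmaUp T X j f ≤ (V : EReal) := by
  classical
  have hXc : X ∈ condSet T X j := ⟨hX, fun i _ => rfl⟩
  have key : ∀ ε : ℝ, 0 < ε → sigmaUp T X j f ≤ ((V + ε : ℝ) : EReal) := by
    intro ε hε
    set eps : ℕ → ℝ≥0∞ := fun k => ENNReal.ofReal ε * (2 : ℝ≥0∞)⁻¹ ^ (k + 1) with heps
    have hepspos : ∀ k, 0 < eps k := by
      intro k
      refine ENNReal.mul_pos ?_ ?_
      · simp [ENNReal.ofReal_pos.mpr hε, ne_of_gt, hε]
      · exact pow_ne_zero _ (by simp)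
    have hgeom : ∑' k : ℕ, (2 : ℝ≥0∞)⁻¹ ^ (k + 1) = 1 := by
      simp [pow_succ', ENNReal.tsum_mul_left, ENNReal.tsum_geometric,
        ENNReal.inv_mul_cancel two_ne_zero (by norm_num : (2 : ℝ≥0∞) ≠ ⊤)]
    have hex : ∀ k : ℕ, ∃ W G N,
        IsNormHedge T X j (A.indicator fun _ => (1 : ℝ≥0∞)) W G N ∧
        (∑' m : ℕ, ENNReal.ofReal (W m)) < eps k := by
      intro k
      have hlt : sInf {c : ℝ≥0∞ | ∃ W G N,
          IsNormHedge T X j (A.indicator fun _ => (1 : ℝ≥0∞)) W G N ∧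
          c = ∑' m : ℕ, ENNReal.ofReal (W m)} < eps k := by
        have h0 : Ibar T X j (A.indicator fun _ => (1 : ℝ≥0∞)) = 0 := hA
        show Ibar T X j (A.indicator fun _ => (1 : ℝ≥0∞)) < eps k
        rw [h0]; exact hepspos k
      obtain ⟨c, ⟨W, G, N, hNG, hc⟩, hclt⟩ := sInf_lt_iff.mp hlt
      exact ⟨W, G, N, hNG, hc ▸ hclt⟩
    choose W G N hNorm hWsum using hex
    set p : ℕ ≃ ℕ × ℕ := Nat.pairEquiv.symm with hp
    set H0 : ℕ → (ℕ → EuclideanSpace ℝ (Fin d)) → EuclideanSpace ℝ (Fin d) :=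
      fun i Y => if i < n then H i Y else 0 with hH0
    set V' : ℕ → ℝ := fun m => match m with
      | 0 => V
      | m + 1 => W (p m).1 (p m).2 with hV'
    set H' : ℕ → ℕ → (ℕ → EuclideanSpace ℝ (Fin d)) → EuclideanSpace ℝ (Fin d) :=
      fun m => match m with
      | 0 => H0
      | m + 1 => G (p m).1 (p m).2 with hH'
    set n' : ℕ → ℕ := fun m => match m with
      | 0 => n
      | m + 1 => N (p m).1 (p m).2 with hn'
    have hsh : IsSuperhedge T X j f V' H' n' := by
      refine ⟨?_, ?_, ?_, ?_⟩
      · intro m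
        cases m with
        | zero =>
          intro i hi Y hY Z hZ hYZ
          show H0 i Y = H0 i Z
          by_cases h : i < n
          · simp only [hH0, if_pos h]
            exact hHna i hi h Y hY Z hZ hYZ
          · simp [hH0, h]
        | succ m => exact (hNorm (p m).1).1 (p m).2
      · intro m
        cases m with
        | zero => exact hn
        | succ m => exact (hNorm (p m).1).2.1 (p m).2
      · intro m hm k hk Y hY
        cases m with
        | zero => exact absurd hm (by norm_num)
        | succ m => exact (hNorm (p m).1).2.2.1 (p m).2 k hk Y hY
      · intro Y hY
        by_cases hYA : Y ∈ A
        · have htop : (∑' m : ℕ,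
              ENNReal.ofReal (piPort (H' (m + 1)) j (n' (m + 1)) (V' (m + 1)) Y)) = ⊤ := by
            have h1 : ∀ k, (1 : ℝ≥0∞) ≤
                ∑' l, ENNReal.ofReal (piPort (G k l) j (N k l) (W k l) Y) := by
              intro k
              have := (hNorm k).2.2.2 Y hY
              rwa [Set.indicator_of_mem hYA] at this
            refine top_le_iff.mp ?_
            calc (⊤ : ℝ≥0∞) = ∑' (_ : ℕ), (1 : ℝ≥0∞) :=
                  (ENNReal.tsum_const_eq_top_of_ne_zero one_ne_zero).symm
              _ ≤ ∑' k, ∑' l, ENNReal.ofReal (piPort (G k l) j (N k l) (W k l) Y) :=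
                  ENNReal.tsum_le_tsum h1
              _ = ∑' q : ℕ × ℕ,
                    ENNReal.ofReal (piPort (G q.1 q.2) j (N q.1 q.2) (W q.1 q.2) Y) :=
                  ENNReal.tsum_prod.symm
              _ = ∑' m : ℕ,
                    ENNReal.ofReal (piPort (H' (m + 1)) j (n' (m + 1)) (V' (m + 1)) Y) :=
                  (p.tsum_eq fun q : ℕ × ℕ =>
                    ENNReal.ofReal (piPort (G q.1 q.2) j (N q.1 q.2) (W q.1 q.2) Y)).symm
          rw [htop, EReal.coe_ennreal_top, EReal.add_top_of_ne_bot (EReal.coe_ne_bot _)]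
          exact le_top
        · have hped : piPort (H' 0) j (n' 0) (V' 0) Y =
              V + ∑ i ∈ Finset.Ico j n, ⟪H i Y, Y (i + 1) - Y i⟫_ℝ := by
            show piPort H0 j n V Y = _
            unfold piPort
            congr 1
            refine Finset.sum_congr rfl fun i hi => ?_
            rw [hH0]
            simp only [if_pos (Finset.mem_Ico.mp hi).2]
          calc f Y ≤ ((V + ∑ i ∈ Finset.Ico j n, ⟪H i Y, Y (i + 1) - Y i⟫_ℝ : ℝ) : EReal) :=
                hhedge Y ⟨hY, hYA⟩
            _ = ((piPort (H' 0) j (n' 0) (V' 0) Y : ℝ) : EReal) := by rw [hped]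
            _ ≤ _ := le_add_of_nonneg_right (EReal.coe_ennreal_nonneg _)
    have hmem : SuperhedgeCost V' ∈ {c : EReal | ∃ Vv Hh nn,
        IsSuperhedge T X j f Vv Hh nn ∧ c = SuperhedgeCost Vv} :=
      ⟨V', H', n', hsh, rfl⟩
    have hcost : SuperhedgeCost V' ≤ ((V + ε : ℝ) : EReal) := by
      have hS : (∑' m : ℕ, ENNReal.ofReal (V' (m + 1))) ≤ ENNReal.ofReal ε := by
        calc (∑' m : ℕ, ENNReal.ofReal (V' (m + 1)))
            = ∑' q : ℕ × ℕ, ENNReal.ofReal (W q.1 q.2) :=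
              p.tsum_eq fun q : ℕ × ℕ => ENNReal.ofReal (W q.1 q.2)
          _ = ∑' k, ∑' l, ENNReal.ofReal (W k l) :=
              ENNReal.tsum_prod (f := fun k l => ENNReal.ofReal (W k l))
          _ ≤ ∑' k, eps k := ENNReal.tsum_le_tsum fun k => (hWsum k).le
          _ = ENNReal.ofReal ε * ∑' k : ℕ, (2 : ℝ≥0∞)⁻¹ ^ (k + 1) :=
              ENNReal.tsum_mul_left
          _ = ENNReal.ofReal ε := by rw [hgeom, mul_one]
      have h1 : SuperhedgeCost V' ≤ (V : EReal) + ((ENNReal.ofReal ε : ℝ≥0∞) : EReal) := by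
        unfold SuperhedgeCost
        exact add_le_add_right (EReal.coe_ennreal_le_coe_ennreal_iff.mpr hS) _
      refine h1.trans ?_
      rw [EReal.coe_ennreal_ofReal, sup_eq_left.mpr hε.le, ← EReal.coe_add]
    exact le_trans (sInf_le hmem) hcost
  refine le_of_forall_gt_imp_ge_of_dense fun c hc => ?_
  induction c using EReal.rec with
  | bot => exact absurd hc (by simp)
  | coe r =>
    have hr : V < r := by exact_mod_cast hc
    have := key (r - V) (sub_pos.mpr hr)
    simpa using this
  | top => exact le_top

end Traj
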